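/- arXiv:1505.02579 — 4 statements merged into one kernel-verified Lean document; each statement's English description precedes it below -/
import Mathlib

section
/- Let bx be an initialisable transparent well-behaved bx over a lawful monad m with state S between A and B, with data readL, readR, setL, setR, initL, initR. Define sets : List A → List S → m (List S) by: sets [] cs = pure cs; sets (a :: as) [] = (a :: as).mapM initL; sets (a :: as) (c :: cs) = do let (_, c') ← setL a c; let cs' ← sets as cs; pure (c' :: cs'). Define the retentive list bx on state ℕ × List S between List A and List B by: lGetL := gets (fun (n, cs) => (cs.take n).map readL); lSetL as := fun (n, cs) => do let cs' ← sets as cs; pure (⟨⟩, (as.length, cs')); lInitL as := do let cs ← as.mapM initL; pure (as.length, cs); and dually lGetR, lSetR, lInitR defined in the same way from readR, setR, initR. Then: (i) (S_LG_L) (do lSetL as; lGetL) = (do lSetL as; pure as) for every as : List A; (ii) for every state (n, cs) with n ≤ cs.length, ((do let x ← lGetL; lSetL x) (n, cs) : m (PUnit × (ℕ × List S))) = pure (⟨⟩, (n, cs)); (iii) (I_LG_L) (do let σ ← lInitL as; pure ((σ.2.take σ.1).map readL, σ)) = (do let σ ← lInitL as; pure (as, σ)) for every as : List A; and the dual claims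 (S_RG_R), (G_RS_R) on states with n ≤ cs.length, and (I_RG_R) hold for the right-hand operations. -/
universe v

def getsS {m : Type → Type v} [Monad m] {σ α : Type} (f : σ → α) : StateT σ m α := do
  let s ← get
  pure (f s)

/-- Sequentially update a list of states from a list of views, initialising fresh states
for any extra views and retaining leftover states. -/
def setsList {m : Type → Type v} [Monad m] {S A : Type}
    (setL : A → StateT S m PUnit) (initL : A → m S) :
    List A → List S → m (List S)
  | [], cs => pure cs
  | a :: as, [] => (a :: as).mapM initL
  | a :: as, c :: cs => do
      let (_, c') ← (setL a).run c
      let cs' ← setsList setL initL as cs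
      pure (c' :: cs')

/-- `getL` of the retentive list bx. -/
def lGet {m : Type → Type v} [Monad m] {S A : Type} (readL : S → A) :
    StateT (ℕ × List S) m (List A) :=
  getsS (fun s => (s.2.take s.1).map readL)

/-- `setL` of the retentive list bx. -/
def lSet {m : Type → Type v} [Monad m] {S A : Type}
    (setL : A → StateT S m PUnit) (initL : A → m S) (as : List A) :
    StateT (ℕ × List S) m PUnit :=
  fun s => do
    let cs' ← setsList setL initL as s.2
    pure (PUnit.unit, (as.length, cs'))

/-- `initL` of the retentive list bx. -/
def lInit {m : Type → Type v} [Monad m] {S A : Type} (initL : A → m S) (as : List A) :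
    m (ℕ × List S) := do
  let cs ← as.mapM initL
  pure (as.length, cs)

section Aux

variable {m : Type → Type v} [Monad m] [LawfulMonad m]

theorem bx_step {α β γ : Type} (t : m α) (u v : α → β)
    (h : (t >>= fun p => pure (u p)) = (t >>= fun p => pure (v p)))
    (k : β → m γ) :
    (t >>= fun p => k (u p)) = (t >>= fun p => k (v p)) := by
  have h2 := congrArg (· >>= k) h
  simpa only [bind_assoc, pure_bind] using h2

variable {S A : Type} (readL : S → A) (setL : A → StateT S m PUnit) (initL : A → m S)

theorem bx_mapM
    (ilgl : ∀ a : A, (do let s ← initL a; pure (readL s, s)) =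
        ((do let s ← initL a; pure (a, s)) : m (A × S))) :
    ∀ as : List A,
      (as.mapM initL >>= fun cs => pure ((cs.take as.length).map readL, cs)) =
      (as.mapM initL >>= fun cs => pure (as, cs))
  | [] => by simp
  | a :: as => by
      have IH := bx_mapM ilgl as
      simp only [List.mapM_cons, bind_assoc, pure_bind, List.length_cons, List.take_succ_cons,
        List.map_cons]
      have inner : ∀ c : S,
          (as.mapM initL >>= fun cs => pure (readL c :: (cs.take as.length).map readL, c :: cs)) =
          (as.mapM initL >>= fun cs => pure (readL c :: as, c :: cs)) := fun c =>
        bx_step _ _ _ IH (fun p => pure (readL c :: p.1, c :: p.2))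
      rw [bind_congr inner]
      exact bx_step (initL a) (fun s => (readL s, s)) (fun s => (a, s)) (ilgl a)
        (fun p => as.mapM initL >>= fun cs => pure (p.1 :: as, p.2 :: cs))

theorem bx_setsA
    (slgl : ∀ (a : A) (c : S),
      ((setL a).run c >>= fun p => pure (readL p.2, p.2)) =
      ((setL a).run c >>= fun p => pure (a, p.2)))
    (ilgl : ∀ a : A, (do let s ← initL a; pure (readL s, s)) =
        ((do let s ← initL a; pure (a, s)) : m (A × S))) :
    ∀ (as : List A) (cs : List S),
      (setsList setL initL as cs >>= fun cs' => pure ((cs'.take as.length).map readL, cs')) =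
      (setsList setL initL as cs >>= fun cs' => pure (as, cs'))
  | [], cs => by simp [setsList]
  | a :: as, [] => bx_mapM readL initL ilgl (a :: as)
  | a :: as, c :: cs => by
      have IH := bx_setsA slgl ilgl as cs
      simp only [setsList, bind_assoc, pure_bind, List.length_cons, List.take_succ_cons,
        List.map_cons]
      have inner : ∀ c' : S,
          (setsList setL initL as cs >>= fun cs' =>
            pure (readL c' :: (cs'.take as.length).map readL, c' :: cs')) =
          (setsList setL initL as cs >>= fun cs' => pure (readL c' :: as, c' :: cs')) := fun c' =>
        bx_step _ _ _ IH (fun p => pure (readL c' :: p.1, c' :: p.2))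
      calc ((setL a).run c >>= fun p => setsList setL initL as cs >>= fun cs' =>
              pure (readL p.2 :: (cs'.take as.length).map readL, p.2 :: cs'))
          = ((setL a).run c >>= fun p => setsList setL initL as cs >>= fun cs' =>
              pure (readL p.2 :: as, p.2 :: cs')) := bind_congr fun p => inner p.2
        _ = ((setL a).run c >>= fun p => setsList setL initL as cs >>= fun cs' =>
              pure (a :: as, p.2 :: cs')) :=
            bx_step ((setL a).run c) (fun p => (readL p.2, p.2)) (fun p => (a, p.2)) (slgl a c)
              (fun q => setsList setL initL as cs >>= fun cs' => pure (q.1 :: as, q.2 :: cs'))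

theorem bx_setsB
    (glsl : ∀ c : S, (setL (readL c)).run c = pure (PUnit.unit, c)) :
    ∀ (n : ℕ) (cs : List S), n ≤ cs.length →
      setsList setL initL ((cs.take n).map readL) cs = pure cs
  | 0, cs, _ => by simp [setsList]
  | n + 1, [], h => by simp at h
  | n + 1, c :: cs, h => by
      simp only [List.take_succ_cons, List.map_cons, setsList, glsl c, pure_bind,
        bx_setsB glsl n cs (Nat.le_of_succ_le_succ h)]

theorem lGet_run (s : ℕ × List S) :
    (lGet (m := m) readL).run s = pure ((s.2.take s.1).map readL, s) := by
  simp [lGet, getsS, StateT.run_bind]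

theorem lSet_run (as : List A) (s : ℕ × List S) :
    (lSet setL initL as).run s =
      setsList setL initL as s.2 >>= fun cs' => pure (PUnit.unit, (as.length, cs')) := rfl

end Aux

theorem list_bx_wellBehaved
    {m : Type → Type v} [Monad m] [LawfulMonad m] {S A B : Type}
    (readL : S → A) (readR : S → B)
    (setL : A → StateT S m PUnit) (setR : B → StateT S m PUnit)
    (initL : A → m S) (initR : B → m S)
    (slgl : ∀ a : A, (do setL a; getsS (m := m) readL) = (do setL a; pure a))
    (glsl : (do let a ← getsS (m := m) readL; setL a) = (pure PUnit.unit : StateT S m PUnit))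
    (srgr : ∀ b : B, (do setR b; getsS (m := m) readR) = (do setR b; pure b))
    (grsr : (do let b ← getsS (m := m) readR; setR b) = (pure PUnit.unit : StateT S m PUnit))
    (ilgl : ∀ a : A, (do let s ← initL a; pure (readL s, s)) =
        ((do let s ← initL a; pure (a, s)) : m (A × S)))
    (irgr : ∀ b : B, (do let s ← initR b; pure (readR s, s)) =
        ((do let s ← initR b; pure (b, s)) : m (B × S))) :
    (∀ as : List A,
      (do lSet setL initL as; lGet (m := m) readL) = (do lSet setL initL as; pure as)) ∧
    (∀ (n : ℕ) (cs : List S), n ≤ cs.length →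
      ((do let x ← lGet (m := m) readL; lSet setL initL x) : StateT (ℕ × List S) m PUnit).run
          (n, cs) = pure (PUnit.unit, (n, cs))) ∧
    (∀ as : List A,
      (do let st ← lInit (m := m) initL as; pure ((st.2.take st.1).map readL, st)) =
      (do let st ← lInit (m := m) initL as; pure (as, st))) ∧
    (∀ bs : List B,
      (do lSet setR initR bs; lGet (m := m) readR) = (do lSet setR initR bs; pure bs)) ∧
    (∀ (n : ℕ) (cs : List S), n ≤ cs.length →
      ((do let y ← lGet (m := m) readR; lSet setR initR y) : StateT (ℕ × List S) m PUnit).run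
          (n, cs) = pure (PUnit.unit, (n, cs))) ∧
    (∀ bs : List B,
      (do let st ← lInit (m := m) initR bs; pure ((st.2.take st.1).map readR, st)) =
      (do let st ← lInit (m := m) initR bs; pure (bs, st))) := by
  have slgl' : ∀ (a : A) (c : S),
      ((setL a).run c >>= fun p => pure (readL p.2, p.2)) =
      ((setL a).run c >>= fun p => pure (a, p.2)) := by
    intro a c
    have h := congrArg (fun t => StateT.run t c) (slgl a)
    simpa [getsS, StateT.run_bind] using h
  have srgr' : ∀ (b : B) (c : S),
      ((setR b).run c >>= fun p => pure (readR p.2, p.2)) =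
      ((setR b).run c >>= fun p => pure (b, p.2)) := by
    intro b c
    have h := congrArg (fun t => StateT.run t c) (srgr b)
    simpa [getsS, StateT.run_bind] using h
  have glsl' : ∀ c : S, (setL (readL c)).run c = pure (PUnit.unit, c) := by
    intro c
    have h := congrArg (fun t => StateT.run t c) glsl
    simpa [getsS, StateT.run_bind] using h
  have grsr' : ∀ c : S, (setR (readR c)).run c = pure (PUnit.unit, c) := by
    intro c
    have h := congrArg (fun t => StateT.run t c) grsr
    simpa [getsS, StateT.run_bind] using h
  refine ⟨?_, ?_, ?_, ?_, ?_, ?_⟩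
  · intro as
    apply StateT.ext
    rintro ⟨n, cs⟩
    simp only [StateT.run_bind, lGet_run, lSet_run, bind_assoc, pure_bind]
    exact bx_step (setsList setL initL as cs)
      (fun cs' => ((cs'.take as.length).map readL, cs')) (fun cs' => (as, cs'))
      (bx_setsA readL setL initL slgl' ilgl as cs)
      (fun p => pure (p.1, (as.length, p.2)))
  · intro n cs hn
    simp only [StateT.run_bind, lGet_run, lSet_run, bind_assoc, pure_bind,
      bx_setsB readL setL initL glsl' n cs hn, List.length_map, List.length_take,
      Nat.min_eq_left hn]
  · intro as
    simp only [lInit, bind_assoc, pure_bind]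
    exact bx_step (as.mapM initL)
      (fun cs => ((cs.take as.length).map readL, cs)) (fun cs => (as, cs))
      (bx_mapM readL initL ilgl as)
      (fun p => pure (p.1, (as.length, p.2)))
  · intro bs
    apply StateT.ext
    rintro ⟨n, cs⟩
    simp only [StateT.run_bind, lGet_run, lSet_run, bind_assoc, pure_bind]
    exact bx_step (setsList setR initR bs cs)
      (fun cs' => ((cs'.take bs.length).map readR, cs')) (fun cs' => (bs, cs'))
      (bx_setsA readR setR initR srgr' irgr bs cs)
      (fun p => pure (p.1, (bs.length, p.2)))
  · intro n cs hn
    simp only [StateT.run_bind, lGet_run, lSet_run, bind_assoc, pure_bind,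
      bx_setsB readR setR initR grsr' n cs hn, List.length_map, List.length_take,
      Nat.min_eq_left hn]
  · intro bs
    simp only [lInit, bind_assoc, pure_bind]
    exact bx_step (bs.mapM initR)
      (fun cs => ((cs.take bs.length).map readR, cs)) (fun cs => (bs, cs))
      (bx_mapM readR initR irgr bs)
      (fun p => pure (p.1, (bs.length, p.2)))
end

section
/- Let C, S, A, B be types and let m := ReaderT C Id be the reader monad. Suppose that for each c : C we are given a transparent well-behaved bx over m with state S between A and B, with data readL c : S → A, readR c : S → B, setL c : A → StateT S m PUnit, setR c : B → StateT S m PUnit, satisfying for each c the four laws (S_LG_L), (G_LS_L), (S_RG_R), (G_RS_R) of a transparent well-behaved bx. Define the switch bx by: getL := do let c ← monadLift (read : m C); gets (readL c); setL a := do let c ← monadLift read; setL c a; getR := do let c ← monadLift read; gets (readR c); setR b := do let c ← monadLift read; setR c b. Then the switch bx is well-behaved: it satisfies all seven laws (G_LG_L) (do let a ← getL; let a' ← getL; pure (a, a')) = (do let a ← getL; pure (a, a)); (S_LG_L) (do setL a; getL) = (do setL a; pure a) for all a; (G_LS_L) (do let a ← getL; setL a) = pure ⟨⟩; the dual laws (G_RG_R),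 (S_RG_R), (G_RS_R); and (G_LG_R) (do let a ← getL; let b ← getR; pure (a, b)) = (do let b ← getR; let a ← getL; pure (a, b)). -/
universe v

/-- The get operation of the switch bx: read the environment, then use the
corresponding pure query. -/
def switchGet {C S A : Type} (rd : C → S → A) : StateT S (ReaderT C Id) A := do
  let c ← monadLift (read : ReaderT C Id C)
  getsS (rd c)

/-- The set operation of the switch bx: read the environment, then use the
corresponding set operation. -/
def switchSet {C S A : Type} (st : C → A → StateT S (ReaderT C Id) PUnit) (a : A) :
    StateT S (ReaderT C Id) PUnit := do
  let c ← monadLift (read : ReaderT C Id C)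
  st c a

theorem switch_wellBehaved {C S A B : Type}
    (readL : C → S → A) (readR : C → S → B)
    (setL : C → A → StateT S (ReaderT C Id) PUnit)
    (setR : C → B → StateT S (ReaderT C Id) PUnit)
    (slgl : ∀ (c : C) (a : A),
      (do setL c a; getsS (readL c)) = (do setL c a; pure a))
    (glsl : ∀ c : C,
      (do let a ← getsS (readL c); setL c a) =
        (pure PUnit.unit : StateT S (ReaderT C Id) PUnit))
    (srgr : ∀ (c : C) (b : B),
      (do setR c b; getsS (readR c)) = (do setR c b; pure b))
    (grsr : ∀ c : C,
      (do let b ← getsS (readR c); setR c b) =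
        (pure PUnit.unit : StateT S (ReaderT C Id) PUnit)) :
    ((do let a ← switchGet readL; let a' ← switchGet readL; pure (a, a')) =
     ((do let a ← switchGet readL; pure (a, a)) : StateT S (ReaderT C Id) (A × A))) ∧
    (∀ a : A, (do switchSet setL a; switchGet readL) = (do switchSet setL a; pure a)) ∧
    ((do let a ← switchGet readL; switchSet setL a) =
      (pure PUnit.unit : StateT S (ReaderT C Id) PUnit)) ∧
    ((do let b ← switchGet readR; let b' ← switchGet readR; pure (b, b')) =
     ((do let b ← switchGet readR; pure (b, b)) : StateT S (ReaderT C Id) (B × B))) ∧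
    (∀ b : B, (do switchSet setR b; switchGet readR) = (do switchSet setR b; pure b)) ∧
    ((do let b ← switchGet readR; switchSet setR b) =
      (pure PUnit.unit : StateT S (ReaderT C Id) PUnit)) ∧
    ((do let a ← switchGet readL; let b ← switchGet readR; pure (a, b)) =
     ((do let b ← switchGet readR; let a ← switchGet readL; pure (a, b)) :
        StateT S (ReaderT C Id) (A × B))) := by
  have key : ∀ (c : C) (a : A) (s : S), readL c (setL c a s c).2 = a := by
    intro c a s
    have := congrFun (congrFun (slgl c a) s) c
    rcases h : setL c a s c with ⟨u, s'⟩
    simpa [getsS, bind, StateT.bind, get, getThe, MonadStateOf.get, StateT.get,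
      pure, StateT.pure, ReaderT.bind, ReaderT.pure, h] using congrArg Prod.fst this
  have keyR : ∀ (c : C) (b : B) (s : S), readR c (setR c b s c).2 = b := by
    intro c b s
    have := congrFun (congrFun (srgr c b) s) c
    rcases h : setR c b s c with ⟨u, s'⟩
    simpa [getsS, bind, StateT.bind, get, getThe, MonadStateOf.get, StateT.get,
      pure, StateT.pure, ReaderT.bind, ReaderT.pure, h] using congrArg Prod.fst this
  have keyGS : ∀ (c : C) (s : S), setL c (readL c s) s c = (PUnit.unit, s) := by
    intro c s
    have := congrFun (congrFun (glsl c) s) c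
    simpa [getsS, bind, StateT.bind, get, getThe, MonadStateOf.get, StateT.get,
      pure, StateT.pure, ReaderT.bind, ReaderT.pure] using this
  have keyGSR : ∀ (c : C) (s : S), setR c (readR c s) s c = (PUnit.unit, s) := by
    intro c s
    have := congrFun (congrFun (grsr c) s) c
    simpa [getsS, bind, StateT.bind, get, getThe, MonadStateOf.get, StateT.get,
      pure, StateT.pure, ReaderT.bind, ReaderT.pure] using this
  refine ⟨?_, ?_, ?_, ?_, ?_, ?_, ?_⟩ <;>
    first
    | (intro x; funext s c;
       rcases h : setL c x s c with ⟨u, s'⟩;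
       have hx := key c x s; rw [h] at hx;
       simp [switchGet, switchSet, getsS, bind, StateT.bind, get, getThe,
         MonadStateOf.get, StateT.get, pure, StateT.pure, monadLift, MonadLift.monadLift,
         StateT.lift, read, MonadReaderOf.read, ReaderT.read, ReaderT.bind, ReaderT.pure,
         readThe, h, hx])
    | (intro x; funext s c;
       rcases h : setR c x s c with ⟨u, s'⟩;
       have hx := keyR c x s; rw [h] at hx;
       simp [switchGet, switchSet, getsS, bind, StateT.bind, get, getThe,
         MonadStateOf.get, StateT.get, pure, StateT.pure, monadLift, MonadLift.monadLift,
         StateT.lift, read, MonadReaderOf.read, ReaderT.read, ReaderT.bind, ReaderT.pure,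
         readThe, h, hx])
    | (intro x; funext s c;
       simp [switchGet, switchSet, getsS, bind, StateT.bind, get, getThe,
         MonadStateOf.get, StateT.get, pure, StateT.pure, monadLift, MonadLift.monadLift,
         StateT.lift, read, MonadReaderOf.read, ReaderT.read, ReaderT.bind, ReaderT.pure,
         readThe, key, keyR, keyGS, keyGSR])
    | (funext s c;
       simp [switchGet, switchSet, getsS, bind, StateT.bind, get, getThe,
         MonadStateOf.get, StateT.get, pure, StateT.pure, monadLift, MonadLift.monadLift,
         StateT.lift, read, MonadReaderOf.read, ReaderT.read, ReaderT.bind, ReaderT.pure,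
         readThe, key, keyR, keyGS, keyGSR])
end

section
/- Consider the List monad with its standard (lawful) monad structure. Let ok : A → B → Bool, bs : A → List B and as : B → List A satisfy: for all a and b, a ∈ as b → ok a b = true, and b ∈ bs a → ok a b = true. Define a bx over List with state A × B between A and B by getL := gets Prod.fst, getR := gets Prod.snd, setL a' := do let (a, b) ← get; if ok a' b then set (a', b) else do let b' ← monadLift (bs a'); set (a', b'), and setR b' := do let (a, b) ← get; if ok a b' then set (a, b') else do let a' ← monadLift (as b'); set (a', b'). Then: (i) (S_LG_L) (do setL a'; getL) = (do setL a'; pure a') and (S_RG_R) (do setR b'; getR) = (do setR b'; pure b') hold for all a' : A and b' : B; (ii) for every state (a, b) with ok a b = true, ((do let x ← getL; setL x) (a, b) : List (PUnit × (A × B))) = pure (⟨⟩, (a, b)) and ((do let y ← getR; setR y) (a, b) : List (PUnit × (A × B))) = pure (⟨⟩, (a, b)); and (iii) the set operations preserve consistency: for every a' : A and every state s : A × B, every element (u, (a'', b'')) of the list setL a' s satisfies ok a'' b'' = true, and likewise every element (u, (a'', b'')) of the list setR b' s satisfies ok a'' b'' = true for every b' : B. -/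
universe v

/-- The left set operation of the nondeterministic bx over the List monad. -/
def ndSetL {A B : Type} (ok : A → B → Bool) (bs : A → List B) (a' : A) :
    StateT (A × B) List PUnit := do
  let (_a, b) ← get
  if ok a' b then set (a', b)
  else do
    let b' ← monadLift (bs a')
    set (a', b')

/-- The right set operation of the nondeterministic bx over the List monad. -/
def ndSetR {A B : Type} (ok : A → B → Bool) (as : B → List A) (b' : B) :
    StateT (A × B) List PUnit := do
  let (a, _b) ← get
  if ok a b' then set (a, b')
  else do
    let a' ← monadLift (as b')
    set (a', b')

set_option synthInstance.maxHeartbeats 1000000 in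
theorem nondet_bx_wellBehaved {A B : Type}
    (ok : A → B → Bool) (bs : A → List B) (as : B → List A)
    (has : ∀ (a : A) (b : B), a ∈ as b → ok a b = true)
    (hbs : ∀ (a : A) (b : B), b ∈ bs a → ok a b = true) :
    (∀ a' : A,
      (do ndSetL ok bs a'; getsS (m := List) (Prod.fst : A × B → A)) =
      (do ndSetL ok bs a'; pure a')) ∧
    (∀ b' : B,
      (do ndSetR ok as b'; getsS (m := List) (Prod.snd : A × B → B)) =
      (do ndSetR ok as b'; pure b')) ∧
    (∀ (a : A) (b : B), ok a b = true →
      (((do let x ← getsS (m := List) (Prod.fst : A × B → A)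
            ndSetL ok bs x) : StateT (A × B) List PUnit).run (a, b) =
         pure (PUnit.unit, (a, b))) ∧
      (((do let y ← getsS (m := List) (Prod.snd : A × B → B)
            ndSetR ok as y) : StateT (A × B) List PUnit).run (a, b) =
         pure (PUnit.unit, (a, b)))) ∧
    (∀ (a' : A) (s : A × B) (u : PUnit) (a'' : A) (b'' : B),
      (u, (a'', b'')) ∈ (ndSetL ok bs a').run s → ok a'' b'' = true) ∧
    (∀ (b' : B) (s : A × B) (u : PUnit) (a'' : A) (b'' : B),
      (u, (a'', b'')) ∈ (ndSetR ok as b').run s → ok a'' b'' = true) := by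
  refine ⟨?_, ?_, ?_, ?_, ?_⟩
  · intro a'
    funext ⟨a, b⟩
    by_cases h : ok a' b <;>
    simp [ndSetL, getsS, StateT.run, bind, StateT.bind, get, getThe, MonadStateOf.get,
      StateT.get, set, StateT.set, pure, StateT.pure, monadLift, MonadLift.monadLift,
      StateT.lift, h, List.singleton, List.flatMap, Function.comp_def]
  · intro b'
    funext ⟨a, b⟩
    by_cases h : ok a b' <;>
    simp [ndSetR, getsS, StateT.run, bind, StateT.bind, get, getThe, MonadStateOf.get,
      StateT.get, set, StateT.set, pure, StateT.pure, monadLift, MonadLift.monadLift,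
      StateT.lift, h, List.singleton, List.flatMap, Function.comp_def]
  · intro a b h
    constructor <;>
    simp [ndSetL, ndSetR, getsS, StateT.run, bind, StateT.bind, get, getThe, MonadStateOf.get,
      StateT.get, set, StateT.set, pure, StateT.pure, monadLift, MonadLift.monadLift,
      StateT.lift, h, List.singleton, List.flatMap, Function.comp_def]
  · intro a' ⟨a, b⟩ u a'' b'' hm
    by_cases h : ok a' b <;>
      simp [ndSetL, StateT.run, bind, StateT.bind, get, getThe, MonadStateOf.get,
        StateT.get, set, StateT.set, pure, StateT.pure, monadLift, MonadLift.monadLift,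
        StateT.lift, h, List.singleton, List.flatMap, Function.comp_def] at hm
    · obtain ⟨rfl, rfl⟩ := hm
      exact h
    · obtain ⟨l, ⟨x, hx, rfl⟩, hmem⟩ := hm
      exact hbs _ _ l
  · intro b' ⟨a, b⟩ u a'' b'' hm
    by_cases h : ok a b' <;>
      simp [ndSetR, StateT.run, bind, StateT.bind, get, getThe, MonadStateOf.get,
        StateT.get, set, StateT.set, pure, StateT.pure, monadLift, MonadLift.monadLift,
        StateT.lift, h, List.singleton, List.flatMap, Function.comp_def] at hm
    · obtain ⟨rfl, rfl⟩ := hm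
      exact h
    · obtain ⟨l, ⟨x, hx, rfl⟩, hmem⟩ := hm
      exact has _ _ l
end

section
/- Let m be a lawful monad, let A and B have decidable equality, and let f : A → B → m B and g : A → B → m A. Define a bx over m with state Σ := (A × B) × List ((A × B) × B) × List ((A × B) × A) between A and B by: getL := gets (fun s => s.1.1); getR := gets (fun s => s.1.2); setL a' := do let ((a, b), fs, bs) ← get; if a = a' then pure ⟨⟩ else match fs.lookup (a', b) with | some b' => set ((a', b'), fs, bs) | none => do let b' ← monadLift (f a' b); set ((a', b'), ((a', b), b') :: fs, bs); and setR b' := do let ((a, b), fs, bs) ← get; if b = b' then pure ⟨⟩ else match bs.lookup (a, b') with | some a' => set ((a', b'), fs, bs) | none => do let a' ← monadLift (g a b'); set ((a', b'), fs, ((a, b'), a') :: bs). Then this 'dynamic' bx is transparent well-behaved: it satisfies (S_LG_L) (do setL a'; getL) = (do setL a'; pure a') for all a' : A; (G_LS_L) (do let a ← getL; setL a) = pure ⟨⟩; (S_RG_R) (do setR b'; getR) = (do setR b'; pure b') for all b' : B; and (G_RS_R) (do let b ← getR; setR b) = pure ⟨⟩. -/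
universe v

/-- The state space of the dynamic ("by example") bx. -/
abbrev DynState (A B : Type) : Type :=
  (A × B) × List ((A × B) × B) × List ((A × B) × A)

/-- The left set operation of the dynamic bx. -/
def dynSetL {m : Type → Type v} [Monad m] {A B : Type} [DecidableEq A] [DecidableEq B]
    (f : A → B → m B) (a' : A) : StateT (DynState A B) m PUnit := do
  let ((a, b), fs, bs) ← get
  if a = a' then pure PUnit.unit
  else
    match fs.lookup (a', b) with
    | some b' => set (((a', b'), fs, bs) : DynState A B)
    | none => do
        let b' ← monadLift (f a' b)
        set (((a', b'), ((a', b), b') :: fs, bs) : DynState A B)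

/-- The right set operation of the dynamic bx. -/
def dynSetR {m : Type → Type v} [Monad m] {A B : Type} [DecidableEq A] [DecidableEq B]
    (g : A → B → m A) (b' : B) : StateT (DynState A B) m PUnit := do
  let ((a, b), fs, bs) ← get
  if b = b' then pure PUnit.unit
  else
    match bs.lookup (a, b') with
    | some a' => set (((a', b'), fs, bs) : DynState A B)
    | none => do
        let a' ← monadLift (g a b')
        set (((a', b'), fs, ((a, b'), a') :: bs) : DynState A B)

theorem dynamic_bx_wellBehaved
    {m : Type → Type v} [Monad m] [LawfulMonad m] {A B : Type}
    [DecidableEq A] [DecidableEq B]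
    (f : A → B → m B) (g : A → B → m A) :
    (∀ a' : A,
      (do dynSetL f a'; getsS (m := m) (fun s : DynState A B => s.1.1)) =
      (do dynSetL f a'; pure a')) ∧
    ((do let a ← getsS (m := m) (fun s : DynState A B => s.1.1); dynSetL f a) =
      (pure PUnit.unit : StateT (DynState A B) m PUnit)) ∧
    (∀ b' : B,
      (do dynSetR g b'; getsS (m := m) (fun s : DynState A B => s.1.2)) =
      (do dynSetR g b'; pure b')) ∧
    ((do let b ← getsS (m := m) (fun s : DynState A B => s.1.2); dynSetR g b) =
      (pure PUnit.unit : StateT (DynState A B) m PUnit)) := by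
  refine ⟨fun a' => ?_, ?_, fun b' => ?_, ?_⟩ <;>
    funext s <;> obtain ⟨⟨a, b⟩, fs, bs⟩ := s <;>
    simp only [dynSetL, dynSetR, getsS, StateT.run_bind, bind, StateT.bind, get, getThe,
      MonadStateOf.get, StateT.get, set, StateT.set, pure, StateT.pure, monadLift,
      MonadLift.monadLift, StateT.lift, pure_bind, bind_assoc]
  · split
    · subst ‹a = a'›; simp [StateT.pure]
    · cases h : List.lookup (a', b) fs <;>
        simp [h, StateT.set, StateT.lift, StateT.bind, StateT.pure]
  · simp [StateT.pure, pure]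
  · split
    · subst ‹b = b'›; simp [StateT.pure]
    · cases h : List.lookup (a, b') bs <;>
        simp [h, StateT.set, StateT.lift, StateT.bind, StateT.pure]
  · simp [StateT.pure, pure]
end
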